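/- Let i(x, ρ) = ρ + 1/(x − ρ). For R > 1 and R−1 < ρ ≤ √(R²−1), define r₁ = (i(−(R−1), ρ) − i(R−1, ρ))/2, r₂ = (i(R+1, ρ) − i(−(R+1), ρ))/2, and d = (i(R+1, ρ) + i(−(R+1), ρ))/2 − (i(−(R−1), ρ) + i(R−1, ρ))/2. Then (r₁, r₂, d) is proportional (with positive factor) to ((R−1)((R+1)² − ρ²), (R+1)(ρ² − (R−1)²), 4Rρ). -/
import Mathlib


noncomputable def inv1D (x ρ : ℝ) : ℝ := ρ + 1 / (x - ρ)

theorem P1_ratio_inside (R ρ : ℝ) (hR : 1 < R) (hρ1 : R - 1 < ρ)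
    (hρ2 : ρ ≤ Real.sqrt (R ^ 2 - 1)) :
    let r₁ := (inv1D (-(R - 1)) ρ - inv1D (R - 1) ρ) / 2
    let r₂ := (inv1D (R + 1) ρ - inv1D (-(R + 1)) ρ) / 2
    let d := (inv1D (R + 1) ρ + inv1D (-(R + 1)) ρ) / 2
             - (inv1D (-(R - 1)) ρ + inv1D (R - 1) ρ) / 2
    ∃ lam : ℝ, 0 < lam ∧
      r₁ = lam * ((R - 1) * ((R + 1) ^ 2 - ρ ^ 2)) ∧
      r₂ = lam * ((R + 1) * (ρ ^ 2 - (R - 1) ^ 2)) ∧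
      d = lam * (4 * R * ρ) := by
  intro r₁ r₂ d
  have hρ0 : 0 < ρ := lt_trans (by linarith) hρ1
  have hsq : ρ ^ 2 ≤ R ^ 2 - 1 := by
    have hs := Real.sq_sqrt (show (0:ℝ) ≤ R ^ 2 - 1 by nlinarith)
    nlinarith [Real.sqrt_nonneg (R ^ 2 - 1)]
  have hlt : ρ < R + 1 := by nlinarith
  have hD1 : 0 < ρ ^ 2 - (R - 1) ^ 2 := by nlinarith
  have hD2 : 0 < (R + 1) ^ 2 - ρ ^ 2 := by nlinarith
  have h1 : -(R - 1) - ρ ≠ 0 := by nlinarith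
  have h2 : R - 1 - ρ ≠ 0 := by nlinarith
  have h3 : R + 1 - ρ ≠ 0 := by nlinarith
  have h4 : -(R + 1) - ρ ≠ 0 := by nlinarith
  have hDD : (ρ ^ 2 - (R - 1) ^ 2) * ((R + 1) ^ 2 - ρ ^ 2) ≠ 0 :=
    mul_ne_zero hD1.ne' hD2.ne'
  refine ⟨1 / ((ρ ^ 2 - (R - 1) ^ 2) * ((R + 1) ^ 2 - ρ ^ 2)), by positivity, ?_, ?_, ?_⟩
  · show (inv1D (-(R - 1)) ρ - inv1D (R - 1) ρ) / 2 = _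
    simp only [inv1D]
    rw [show ρ + 1 / (-(R - 1) - ρ) - (ρ + 1 / (R - 1 - ρ))
          = 1 / (-(R - 1) - ρ) - 1 / (R - 1 - ρ) by ring,
        div_sub_div _ _ h1 h2, div_div, one_div_mul_eq_div,
        div_eq_div_iff (mul_ne_zero (mul_ne_zero h1 h2) two_ne_zero) hDD]
    ring
  · show (inv1D (R + 1) ρ - inv1D (-(R + 1)) ρ) / 2 = _
    simp only [inv1D]
    rw [show ρ + 1 / (R + 1 - ρ) - (ρ + 1 / (-(R + 1) - ρ))
          = 1 / (R + 1 - ρ) - 1 / (-(R + 1) - ρ) by ring,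
        div_sub_div _ _ h3 h4, div_div, one_div_mul_eq_div,
        div_eq_div_iff (mul_ne_zero (mul_ne_zero h3 h4) two_ne_zero) hDD]
    ring
  · show (inv1D (R + 1) ρ + inv1D (-(R + 1)) ρ) / 2
        - (inv1D (-(R - 1)) ρ + inv1D (R - 1) ρ) / 2 = _
    simp only [inv1D]
    rw [show (ρ + 1 / (R + 1 - ρ) + (ρ + 1 / (-(R + 1) - ρ))) / 2
          - (ρ + 1 / (-(R - 1) - ρ) + (ρ + 1 / (R - 1 - ρ))) / 2
          = (1 / (R + 1 - ρ) + 1 / (-(R + 1) - ρ)) / 2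
            - (1 / (-(R - 1) - ρ) + 1 / (R - 1 - ρ)) / 2 by ring,
        div_add_div _ _ h3 h4, div_add_div _ _ h1 h2, div_div, div_div,
        div_sub_div _ _ (mul_ne_zero (mul_ne_zero h3 h4) two_ne_zero)
          (mul_ne_zero (mul_ne_zero h1 h2) two_ne_zero),
        one_div_mul_eq_div,
        div_eq_div_iff (mul_ne_zero (mul_ne_zero (mul_ne_zero h3 h4) two_ne_zero)
          (mul_ne_zero (mul_ne_zero h1 h2) two_ne_zero)) hDD]
    ring
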